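/- The unique minimizer of the constrained weighted least squares problem min_φ Σ_{∅ ⊊ S ⊊ N} ω(S)·(v(S) − v(∅) − Σ_{i∈S} φ_i)² subject to Σ_i φ_i = v(N) − v(∅) is the Shapley value vector. -/

import Mathlib

open Finset

noncomputable def shapley (d : ℕ) (v : Finset (Fin d) → ℝ) (i : Fin d) : ℝ :=
  ∑ S ∈ (Finset.univ.erase i).powerset,
    ((S.card.factorial : ℝ) * ((d - S.card - 1).factorial : ℝ) / (d.factorial : ℝ)) *
      (v (insert i S) - v S)

/-- The Shapley kernel weight. -/
noncomputable def shapKernel (d : ℕ) (S : Finset (Fin d)) : ℝ :=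
  ((d : ℝ) - 1) / ((d.choose S.card : ℝ) * (S.card : ℝ) * ((d : ℝ) - (S.card : ℝ)))

/-- The constrained weighted least squares objective. -/
noncomputable def lsLoss (d : ℕ) (v : Finset (Fin d) → ℝ) (φ : Fin d → ℝ) : ℝ :=
  ∑ S ∈ Finset.univ.filter (fun S : Finset (Fin d) => S.Nonempty ∧ S ≠ Finset.univ),
    shapKernel d S * (v S - v ∅ - ∑ j ∈ S, φ j) ^ 2

namespace ShapAux

/-- The Shapley weight as a function of coalition size. -/
noncomputable def p (d t : ℕ) : ℝ :=
  (t.factorial : ℝ) * ((d - t - 1).factorial : ℝ) / (d.factorial : ℝ)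

lemma shapley_eq (d : ℕ) (v : Finset (Fin d) → ℝ) (i : Fin d) :
    shapley d v i = ∑ S ∈ (univ.erase i).powerset, p d S.card * (v (insert i S) - v S) := rfl

lemma kernel_card (d : ℕ) (hd : 2 ≤ d) (t : ℕ) (ht : t ≤ d - 2) {S : Finset (Fin d)}
    (hS : S.card = t + 1) :
    shapKernel d S = ((d : ℝ) - 1) / (d : ℝ) * (p d t + p d (t + 1)) := by
  obtain ⟨m, rfl⟩ : ∃ m, d = t + 2 + m := ⟨d - 2 - t, by omega⟩
  have e1 : t + 2 + m - t - 1 = m + 1 := by omega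
  have e2 : t + 2 + m - (t + 1) - 1 = m := by omega
  have hkey : ((t + 2 + m).choose (t + 1)) * (t + 1).factorial * (m + 1).factorial
      = (t + 2 + m).factorial := by
    have := Nat.choose_mul_factorial_mul_factorial (n := t + 2 + m) (k := t + 1) (by omega)
    have e3 : t + 2 + m - (t + 1) = m + 1 := by omega
    rwa [e3] at this
  have hkeyR : (((t + 2 + m).choose (t + 1)) : ℝ) * ((t + 1).factorial : ℝ)
      * ((m + 1).factorial : ℝ) = ((t + 2 + m).factorial : ℝ) := by exact_mod_cast hkey
  have hC : (0 : ℝ) < (((t + 2 + m).choose (t + 1)) : ℝ) := by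
    exact_mod_cast Nat.choose_pos (show t + 1 ≤ t + 2 + m by omega)
  have hfac : (0 : ℝ) < ((t + 2 + m).factorial : ℝ) := by
    exact_mod_cast Nat.factorial_pos _
  have ht1 : (0:ℝ) < ((t+1).factorial : ℝ) := by exact_mod_cast Nat.factorial_pos _
  have hm1 : (0:ℝ) < ((m+1).factorial : ℝ) := by exact_mod_cast Nat.factorial_pos _
  simp only [shapKernel, p, hS, e1, e2]
  have ed : ((t + 2 + m : ℕ) : ℝ) - ((t + 1 : ℕ) : ℝ) = (m : ℝ) + 1 := by push_cast; ring
  push_cast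
  rw [show ((t:ℝ) + 2 + (m:ℝ)) - ((t:ℝ)+1) = (m:ℝ)+1 by ring]
  have hfs1 : ((t+1).factorial : ℝ) = ((t:ℝ)+1) * (t.factorial : ℝ) := by
    rw [Nat.factorial_succ]; push_cast; ring
  have hfs2 : ((m+1).factorial : ℝ) = ((m:ℝ)+1) * (m.factorial : ℝ) := by
    rw [Nat.factorial_succ]; push_cast; ring
  have hD : ((t + 2 + m).factorial : ℝ)
      = (((t + 2 + m).choose (t + 1)) : ℝ) * (((t:ℝ)+1) * (t.factorial : ℝ))
        * (((m:ℝ)+1) * (m.factorial : ℝ)) := by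
    rw [← hkeyR, hfs1, hfs2]
  rw [hfs1, hfs2, hD]
  have h1 : ((t:ℝ)+1) ≠ 0 := by positivity
  have h2 : ((m:ℝ)+1) ≠ 0 := by positivity
  have h3 : (t.factorial : ℝ) ≠ 0 := by positivity
  have h4 : (m.factorial : ℝ) ≠ 0 := by positivity
  have h5 : (((t + 2 + m).choose (t + 1)) : ℝ) ≠ 0 := ne_of_gt hC
  have h6 : ((t:ℝ) + 2 + (m:ℝ)) ≠ 0 := by positivity
  field_simp
  ring

lemma q_term (d : ℕ) (hd : 2 ≤ d) (t : ℕ) (ht : t ≤ d - 2) :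
    p d t + p d (t + 1) = 1 / ((d : ℝ) - 1) * ((d - 2).choose t : ℝ)⁻¹ := by
  obtain ⟨m, rfl⟩ : ∃ m, d = t + 2 + m := ⟨d - 2 - t, by omega⟩
  have e1 : t + 2 + m - t - 1 = m + 1 := by omega
  have e2 : t + 2 + m - (t + 1) - 1 = m := by omega
  have e3 : t + 2 + m - 2 = t + m := by omega
  have hkey : ((t + m).choose t) * t.factorial * m.factorial = (t + m).factorial := by
    have := Nat.choose_mul_factorial_mul_factorial (n := t + m) (k := t) (by omega)
    rwa [show t + m - t = m by omega] at this
  have hkeyR : (((t + m).choose t) : ℝ) * (t.factorial : ℝ) * (m.factorial : ℝ)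
      = ((t + m).factorial : ℝ) := by exact_mod_cast hkey
  have hC : (0 : ℝ) < (((t + m).choose t) : ℝ) := by
    exact_mod_cast Nat.choose_pos (show t ≤ t + m by omega)
  simp only [p, e1, e2, e3]
  have hfs1 : ((t + 1).factorial : ℝ) = ((t : ℝ) + 1) * (t.factorial : ℝ) := by
    rw [Nat.factorial_succ]; push_cast; ring
  have hfs2 : ((m + 1).factorial : ℝ) = ((m : ℝ) + 1) * (m.factorial : ℝ) := by
    rw [Nat.factorial_succ]; push_cast; ring
  have hD : ((t + 2 + m).factorial : ℝ)
      = ((t : ℝ) + 2 + m) * (((t : ℝ) + 1 + m) * ((t + m).factorial : ℝ)) := by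
    rw [show t + 2 + m = (t + 1 + m) + 1 by omega, Nat.factorial_succ,
      show t + 1 + m = (t + m) + 1 by omega, Nat.factorial_succ]
    push_cast; ring
  rw [hfs1, hfs2, hD, ← hkeyR]
  have h1 : ((t:ℝ)+1) ≠ 0 := by positivity
  have h2 : ((m:ℝ)+1) ≠ 0 := by positivity
  have h3 : (t.factorial : ℝ) ≠ 0 := by positivity
  have h4 : (m.factorial : ℝ) ≠ 0 := by positivity
  have h5 : (((t + m).choose t) : ℝ) ≠ 0 := ne_of_gt hC
  have h6 : ((t:ℝ) + 2 + (m:ℝ)) ≠ 0 := by positivity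
  have h7 : ((t:ℝ) + 1 + (m:ℝ)) ≠ 0 := by positivity
  have h8 : ((t:ℝ) + 2 + (m:ℝ)) - 1 ≠ 0 := by
    intro h; apply h7; linarith
  push_cast
  field_simp
  ring

lemma q_sum (d : ℕ) (hd : 2 ≤ d) {A : Finset (Fin d)} (hA : A.card = d - 2) :
    ∑ T ∈ A.powerset, (p d T.card + p d (T.card + 1)) = 1 := by
  rw [Finset.sum_powerset]
  have h1 : ∀ j ∈ range (A.card + 1),
      ∑ T ∈ powersetCard j A, (p d T.card + p d (T.card + 1))
        = ((d - 2).choose j : ℝ) * (1 / ((d : ℝ) - 1) * ((d - 2).choose j : ℝ)⁻¹) := by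
    intro j hj
    rw [mem_range] at hj
    have := Finset.sum_powersetCard j A (fun n => p d n + p d (n + 1))
    rw [this, hA, nsmul_eq_mul, q_term d hd j (by omega)]
  rw [Finset.sum_congr rfl h1]
  have hch : ∀ j ∈ range (A.card + 1), ((d - 2).choose j : ℝ) ≠ 0 := by
    intro j hj
    rw [mem_range, hA] at hj
    exact_mod_cast (Nat.choose_pos (by omega : j ≤ d - 2)).ne'
  have h2 : ∀ j ∈ range (A.card + 1),
      ((d - 2).choose j : ℝ) * (1 / ((d : ℝ) - 1) * ((d - 2).choose j : ℝ)⁻¹)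
        = 1 / ((d : ℝ) - 1) := by
    intro j hj
    rw [mul_comm (1 / ((d : ℝ) - 1)) _, ← mul_assoc, mul_inv_cancel₀ (hch j hj), one_mul]
  rw [Finset.sum_congr rfl h2, Finset.sum_const, hA, card_range, nsmul_eq_mul]
  have hne : ((d : ℝ) - 1) ≠ 0 := by
    have : (2:ℝ) ≤ (d:ℝ) := by exact_mod_cast hd
    intro h; linarith
  rw [show ((d - 2 + 1 : ℕ) : ℝ) = (d : ℝ) - 1 by
    push_cast [Nat.cast_sub hd]; ring]
  rw [mul_one_div, div_self hne]

lemma coeff (d : ℕ) (hd : 1 ≤ d) (t : ℕ) (ht : t ≤ d) :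
    (t : ℝ) * p d (t - 1) - ((d - t : ℕ) : ℝ) * p d t
      = (if t = d then 1 else 0) - (if t = 0 then 1 else 0) := by
  have hfd : (0:ℝ) < (d.factorial : ℝ) := by exact_mod_cast Nat.factorial_pos _
  rcases Nat.eq_zero_or_pos t with rfl | htpos
  · simp only [p, if_neg (by omega : ¬ (0 = d)), if_pos rfl]
    have e1 : d - 0 - 1 = d - 1 := by omega
    have h : ((d - 0 : ℕ) : ℝ) = (d : ℝ) := by norm_num
    rw [e1, h]
    have hk : (d : ℝ) * ((d-1).factorial : ℝ) = (d.factorial : ℝ) := by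
      exact_mod_cast Nat.mul_factorial_pred (by omega)
    push_cast
    rw [show (d:ℝ) * (Nat.factorial 0 * ((d-1).factorial : ℝ) / d.factorial)
        = ((d:ℝ) * ((d-1).factorial : ℝ)) / d.factorial by simp [Nat.factorial]; ring, hk]
    rw [div_self (ne_of_gt hfd)]
    ring
  rcases eq_or_lt_of_le ht with rfl | htlt
  · simp only [p, if_pos rfl, if_neg (by omega : ¬ (t = 0))]
    have e1 : t - (t - 1) - 1 = 0 := by omega
    have e2 : (t - t : ℕ) = 0 := by omega
    rw [e1, e2]
    have hk : (t : ℝ) * ((t-1).factorial : ℝ) = (t.factorial : ℝ) := by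
      exact_mod_cast Nat.mul_factorial_pred htpos.ne'
    simp only [Nat.cast_zero, Nat.factorial_zero, Nat.cast_one, mul_one, zero_mul,
      Nat.factorial]
    rw [show (t:ℝ) * (((t-1).factorial : ℝ) / (t.factorial : ℝ))
        = ((t:ℝ) * ((t-1).factorial : ℝ)) / (t.factorial : ℝ) by ring, hk,
      div_self (ne_of_gt hfd)]
    simp
  · simp only [p, if_neg (by omega : ¬ (t = d)), if_neg (by omega : ¬ (t = 0))]
    have e1 : d - (t - 1) - 1 = d - t := by omega
    rw [e1]
    have hk1 : (t : ℝ) * ((t-1).factorial : ℝ) = (t.factorial : ℝ) := by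
      exact_mod_cast Nat.mul_factorial_pred htpos.ne'
    have hk2 : ((d - t : ℕ) : ℝ) * ((d - t - 1).factorial : ℝ) = ((d - t).factorial : ℝ) := by
      exact_mod_cast Nat.mul_factorial_pred (by omega : d - t ≠ 0)
    rw [show (t:ℝ) * (((t-1).factorial : ℝ) * ((d-t).factorial : ℝ) / (d.factorial : ℝ))
          - ((d - t : ℕ) : ℝ) * ((t.factorial : ℝ) * ((d-t-1).factorial : ℝ) / (d.factorial : ℝ))
        = ((t:ℝ) * ((t-1).factorial : ℝ)) * ((d-t).factorial : ℝ) / (d.factorial : ℝ)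
          - (((d - t : ℕ) : ℝ) * ((d-t-1).factorial : ℝ)) * (t.factorial : ℝ) / (d.factorial : ℝ)
        by ring, hk1, hk2]
    ring

lemma efficiency (d : ℕ) (hd : 1 ≤ d) (v : Finset (Fin d) → ℝ) :
    ∑ i, shapley d v i = v univ - v ∅ := by
  have hpow : ∀ i : Fin d, (univ.erase i).powerset
      = univ.powerset.filter (fun S => i ∉ S) := by
    intro i; ext S
    simp [Finset.mem_powerset, Finset.subset_erase, Finset.mem_filter]
  have step1 : ∑ i, shapley d v i
      = ∑ S ∈ (univ : Finset (Fin d)).powerset, ∑ i : Fin d,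
          if i ∉ S then p d S.card * (v (insert i S) - v S) else 0 := by
    rw [← Finset.sum_comm]
    refine Finset.sum_congr rfl fun i _ => ?_
    rw [shapley_eq, hpow i, Finset.sum_filter]
  rw [step1]
  have step2 : ∀ S ∈ (univ : Finset (Fin d)).powerset,
      (∑ i : Fin d, if i ∉ S then p d S.card * (v (insert i S) - v S) else 0)
        = (∑ i ∈ Sᶜ, p d S.card * v (insert i S))
          - ((d - S.card : ℕ) : ℝ) * p d S.card * v S := by
    intro S _
    have h1 : ∀ i : Fin d, (if i ∉ S then p d S.card * (v (insert i S) - v S) else 0)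
        = (if i ∈ Sᶜ then p d S.card * v (insert i S) else 0)
          - (if i ∈ Sᶜ then p d S.card * v S else 0) := by
      intro i; simp only [Finset.mem_compl]; split_ifs <;> ring
    rw [Finset.sum_congr rfl fun i _ => h1 i, Finset.sum_sub_distrib,
      Finset.sum_ite_mem, Finset.sum_ite_mem, univ_inter,
      Finset.sum_const, nsmul_eq_mul, Finset.card_compl, Fintype.card_fin]
    ring
  rw [Finset.sum_congr rfl step2, Finset.sum_sub_distrib]
  have key : ∑ S ∈ (univ : Finset (Fin d)).powerset, ∑ i ∈ Sᶜ, p d S.card * v (insert i S)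
      = ∑ T ∈ (univ : Finset (Fin d)).powerset, (T.card : ℝ) * p d (T.card - 1) * v T := by
    have h2 : ∑ T ∈ (univ : Finset (Fin d)).powerset, (T.card : ℝ) * p d (T.card - 1) * v T
        = ∑ T ∈ (univ : Finset (Fin d)).powerset, ∑ i ∈ T, p d (T.card - 1) * v T := by
      refine Finset.sum_congr rfl fun T _ => ?_
      rw [Finset.sum_const, nsmul_eq_mul]; ring
    rw [h2, Finset.sum_sigma', Finset.sum_sigma']
    refine Finset.sum_nbij' (fun x => ⟨insert x.2 x.1, x.2⟩) (fun x => ⟨x.1.erase x.2, x.2⟩)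
      ?_ ?_ ?_ ?_ ?_
    · rintro ⟨S, i⟩ hx
      simp only [Finset.mem_sigma, Finset.mem_powerset, Finset.mem_compl] at hx ⊢
      exact ⟨subset_univ _, Finset.mem_insert_self _ _⟩
    · rintro ⟨T, i⟩ hx
      simp only [Finset.mem_sigma, Finset.mem_powerset, Finset.mem_compl] at hx ⊢
      exact ⟨subset_univ _, Finset.notMem_erase _ _⟩
    · rintro ⟨S, i⟩ hx
      simp only [Finset.mem_sigma, Finset.mem_powerset, Finset.mem_compl] at hx
      exact congrArg (fun s => (⟨s, i⟩ : Σ _ : Finset (Fin d), Fin d))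
        (Finset.erase_insert hx.2)
    · rintro ⟨T, i⟩ hx
      simp only [Finset.mem_sigma, Finset.mem_powerset, Finset.mem_compl] at hx
      exact congrArg (fun s => (⟨s, i⟩ : Σ _ : Finset (Fin d), Fin d))
        (Finset.insert_erase hx.2)
    · rintro ⟨S, i⟩ hx
      simp only [Finset.mem_sigma, Finset.mem_powerset, Finset.mem_compl] at hx
      rw [Finset.card_insert_of_notMem hx.2]
      simp
  rw [key, ← Finset.sum_sub_distrib]
  have step3 : ∀ T ∈ (univ : Finset (Fin d)).powerset,
      (T.card : ℝ) * p d (T.card - 1) * v T - ((d - T.card : ℕ) : ℝ) * p d T.card * v T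
        = (if T = univ then 1 else 0) * v T - (if T = ∅ then 1 else 0) * v T := by
    intro T hT
    have hc : T.card ≤ d := by simpa using Finset.card_le_univ T
    have hco := coeff d hd T.card hc
    have h1 : (T.card = d) ↔ (T = univ) := by
      rw [← Finset.card_eq_iff_eq_univ, Fintype.card_fin]
    have h2 : (T.card = 0) ↔ (T = ∅) := Finset.card_eq_zero
    simp only [h1, h2] at hco
    calc (T.card : ℝ) * p d (T.card - 1) * v T - ((d - T.card : ℕ) : ℝ) * p d T.card * v T
        = ((T.card : ℝ) * p d (T.card - 1) - ((d - T.card : ℕ) : ℝ) * p d T.card) * v T := by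
          ring
      _ = ((if T = univ then 1 else 0) - (if T = ∅ then 1 else 0)) * v T := by rw [hco]
      _ = (if T = univ then 1 else 0) * v T - (if T = ∅ then 1 else 0) * v T := by ring
  rw [Finset.sum_congr rfl step3, Finset.sum_sub_distrib]
  have h4 : ∑ T ∈ (univ : Finset (Fin d)).powerset, (if T = univ then 1 else 0) * v T
      = v univ := by
    rw [Finset.sum_congr rfl (fun T (_ : T ∈ _) => (by split_ifs <;> simp :
      (if T = univ then (1:ℝ) else 0) * v T = if T = univ then v T else 0)),
      Finset.sum_ite_eq' _ _ v, if_pos (Finset.mem_powerset_self _)]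
  have h5 : ∑ T ∈ (univ : Finset (Fin d)).powerset, (if T = ∅ then 1 else 0) * v T
      = v ∅ := by
    rw [Finset.sum_congr rfl (fun T (_ : T ∈ _) => (by split_ifs <;> simp :
      (if T = ∅ then (1:ℝ) else 0) * v T = if T = ∅ then v T else 0)),
      Finset.sum_ite_eq' _ _ v, if_pos (Finset.empty_mem_powerset _)]
  rw [h4, h5]

lemma cardA (d : ℕ) {i j : Fin d} (hij : i ≠ j) :
    ((univ.erase i).erase j).card = d - 2 := by
  rw [Finset.card_erase_of_mem (Finset.mem_erase.2 ⟨hij.symm, Finset.mem_univ _⟩),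
    Finset.card_erase_of_mem (Finset.mem_univ _), Finset.card_univ, Fintype.card_fin]
  omega

lemma reindex_ij (d : ℕ) {i j : Fin d} (hij : i ≠ j) (g : Finset (Fin d) → ℝ) :
    ∑ S ∈ (univ.filter
        (fun S : Finset (Fin d) => S.Nonempty ∧ S ≠ univ)).filter
        (fun S => i ∈ S ∧ j ∉ S), g S
      = ∑ T ∈ ((univ.erase i).erase j).powerset, g (insert i T) := by
  refine Finset.sum_nbij' (fun S => S.erase i) (fun T => insert i T) ?_ ?_ ?_ ?_ ?_
  · intro S hS
    simp only [Finset.mem_filter, Finset.mem_univ, true_and] at hS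
    obtain ⟨⟨hne, hnu⟩, hiS, hjS⟩ := hS
    rw [Finset.mem_powerset]
    intro k hk
    rw [Finset.mem_erase] at hk ⊢
    rw [Finset.mem_erase]
    exact ⟨fun h => hjS (h ▸ hk.2), hk.1, Finset.mem_univ _⟩
  · intro T hT
    rw [Finset.mem_powerset] at hT
    have hjT : j ∉ T := fun h => (Finset.mem_erase.1 (hT h)).1 rfl
    have hiT : i ∉ T := fun h => (Finset.mem_erase.1 ((Finset.erase_subset _ _) (hT h))).1 rfl
    simp only [Finset.mem_filter, Finset.mem_univ, true_and]
    refine ⟨⟨Finset.insert_nonempty _ _, fun h => ?_⟩, Finset.mem_insert_self _ _, ?_⟩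
    · have : j ∈ insert i T := h ▸ Finset.mem_univ j
      rcases Finset.mem_insert.1 this with h' | h'
      · exact hij h'.symm
      · exact hjT h'
    · intro h
      rcases Finset.mem_insert.1 h with h' | h'
      · exact hij h'.symm
      · exact hjT h'
  · intro S hS
    simp only [Finset.mem_filter] at hS
    exact Finset.insert_erase hS.2.1
  · intro T hT
    rw [Finset.mem_powerset] at hT
    have hiT : i ∉ T := fun h => (Finset.mem_erase.1 ((Finset.erase_subset _ _) (hT h))).1 rfl
    exact Finset.erase_insert hiT
  · intro S hS
    simp only [Finset.mem_filter] at hS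
    rw [Finset.insert_erase hS.2.1]

lemma shapley_split (d : ℕ) (v : Finset (Fin d) → ℝ) {i j : Fin d} (hij : i ≠ j) :
    shapley d v i
      = ∑ T ∈ ((univ.erase i).erase j).powerset,
          (p d T.card * (v (insert i T) - v T)
            + p d (T.card + 1) * (v (insert i (insert j T)) - v (insert j T))) := by
  rw [shapley_eq, ← Finset.sum_filter_add_sum_filter_not ((univ.erase i).powerset)
    (fun S => j ∈ S)]
  have h1 : (univ.erase i).powerset.filter (fun S => ¬ j ∈ S)
      = ((univ.erase i).erase j).powerset := by
    ext S
    simp only [Finset.mem_filter, Finset.mem_powerset, Finset.subset_erase]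
  have h2 : ∑ S ∈ (univ.erase i).powerset.filter (fun S => j ∈ S),
        p d S.card * (v (insert i S) - v S)
      = ∑ T ∈ ((univ.erase i).erase j).powerset,
          p d (T.card + 1) * (v (insert i (insert j T)) - v (insert j T)) := by
    refine Finset.sum_nbij' (fun S => S.erase j) (fun T => insert j T) ?_ ?_ ?_ ?_ ?_
    · intro S hS
      simp only [Finset.mem_filter, Finset.mem_powerset] at hS ⊢
      rw [Finset.subset_erase]
      exact ⟨(Finset.erase_subset _ _).trans hS.1, Finset.notMem_erase _ _⟩
    · intro T hT
      simp only [Finset.mem_powerset, Finset.subset_erase] at hT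
      simp only [Finset.mem_filter, Finset.mem_powerset]
      refine ⟨?_, Finset.mem_insert_self _ _⟩
      intro k hk
      rw [Finset.mem_erase]
      rcases Finset.mem_insert.1 hk with rfl | h'
      · exact ⟨hij.symm, Finset.mem_univ _⟩
      · exact ⟨fun e => hT.1.2 (e ▸ h'), Finset.mem_univ _⟩
    · intro S hS
      simp only [Finset.mem_filter] at hS
      exact Finset.insert_erase hS.2
    · intro T hT
      simp only [Finset.mem_powerset, Finset.subset_erase] at hT
      exact Finset.erase_insert hT.2
    · intro S hS
      simp only [Finset.mem_filter, Finset.mem_powerset] at hS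
      have hjS : j ∈ S := hS.2
      rw [Finset.insert_erase hjS, Finset.card_erase_of_mem hjS]
      have : S.card ≠ 0 := Finset.card_ne_zero_of_mem hjS
      rw [show S.card - 1 + 1 = S.card by omega]
  rw [h1, h2, ← Finset.sum_add_distrib]
  exact Finset.sum_congr rfl fun T _ => by ring

lemma shapley_diff (d : ℕ) (v : Finset (Fin d) → ℝ) {i j : Fin d} (hij : i ≠ j) :
    shapley d v i - shapley d v j
      = ∑ T ∈ ((univ.erase i).erase j).powerset,
          (p d T.card + p d (T.card + 1)) * (v (insert i T) - v (insert j T)) := by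
  rw [shapley_split d v hij, shapley_split d v hij.symm, Finset.erase_right_comm,
    ← Finset.sum_sub_distrib]
  refine Finset.sum_congr rfl fun T _ => ?_
  rw [Finset.insert_comm j i]
  ring

lemma memA (d : ℕ) {i j : Fin d} {T : Finset (Fin d)}
    (hT : T ∈ ((univ.erase i).erase j).powerset) : i ∉ T ∧ j ∉ T := by
  rw [Finset.mem_powerset, Finset.subset_erase] at hT
  have := Finset.subset_erase.1 hT.1
  exact ⟨this.2, hT.2⟩

lemma cardT (d : ℕ) {i j : Fin d} (hij : i ≠ j) {T : Finset (Fin d)}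
    (hT : T ∈ ((univ.erase i).erase j).powerset) : T.card ≤ d - 2 := by
  rw [Finset.mem_powerset] at hT
  have := Finset.card_le_card hT
  rwa [cardA d hij] at this

lemma kernel_insert (d : ℕ) (hd : 2 ≤ d) {i j : Fin d} (hij : i ≠ j) {T : Finset (Fin d)}
    (hT : T ∈ ((univ.erase i).erase j).powerset) :
    shapKernel d (insert i T) = ((d : ℝ) - 1) / (d : ℝ) * (p d T.card + p d (T.card + 1)) :=
  kernel_card d hd T.card (cardT d hij hT)
    (Finset.card_insert_of_notMem (memA d hT).1)

lemma Bsum (d : ℕ) (hd : 2 ≤ d) {i j : Fin d} (hij : i ≠ j) :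
    ∑ T ∈ ((univ.erase i).erase j).powerset, shapKernel d (insert i T)
      = ((d : ℝ) - 1) / (d : ℝ) := by
  rw [Finset.sum_congr rfl fun T hT => kernel_insert d hd hij hT, ← Finset.mul_sum,
    q_sum d hd (cardA d hij), mul_one]

lemma kernelsum_vals (d : ℕ) (hd : 2 ≤ d) (v : Finset (Fin d) → ℝ) {i j : Fin d} (hij : i ≠ j) :
    ∑ T ∈ ((univ.erase i).erase j).powerset,
        shapKernel d (insert i T) * (v (insert i T) - v (insert j T))
      = ((d : ℝ) - 1) / (d : ℝ) * (shapley d v i - shapley d v j) := by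
  rw [shapley_diff d v hij, Finset.mul_sum]
  refine Finset.sum_congr rfl fun T hT => ?_
  rw [kernel_insert d hd hij hT]
  ring

/-- the family of proper nonempty coalitions -/
noncomputable def F (d : ℕ) : Finset (Finset (Fin d)) :=
  univ.filter (fun S : Finset (Fin d) => S.Nonempty ∧ S ≠ univ)

/-- the residual of the Shapley value -/
noncomputable def r (d : ℕ) (v : Finset (Fin d) → ℝ) (S : Finset (Fin d)) : ℝ :=
  v S - v ∅ - ∑ k ∈ S, shapley d v k

/-- per-player aggregated stationarity coefficient -/
noncomputable def c (d : ℕ) (v : Finset (Fin d) → ℝ) (i : Fin d) : ℝ :=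
  ∑ S ∈ F d, if i ∈ S then shapKernel d S * r d v S else 0

lemma r_insert (d : ℕ) (v : Finset (Fin d) → ℝ) {i : Fin d} {T : Finset (Fin d)} (hiT : i ∉ T) :
    r d v (insert i T) = v (insert i T) - v ∅ - shapley d v i - ∑ k ∈ T, shapley d v k := by
  rw [r, Finset.sum_insert hiT]; ring

lemma kernel_congr_card (d : ℕ) {S S' : Finset (Fin d)} (h : S.card = S'.card) :
    shapKernel d S = shapKernel d S' := by
  rw [shapKernel, shapKernel, h]

lemma c_const (d : ℕ) (v : Finset (Fin d) → ℝ) (hd : 2 ≤ d) (i j : Fin d) :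
    c d v i = c d v j := by
  rcases eq_or_ne i j with rfl | hij
  · rfl
  have split : ∀ (S : Finset (Fin d)) (x : ℝ),
      ((if i ∈ S then x else 0) - (if j ∈ S then x else 0))
        = (if i ∈ S ∧ j ∉ S then x else 0) - (if j ∈ S ∧ i ∉ S then x else 0) := by
    intro S x
    by_cases h1 : i ∈ S <;> by_cases h2 : j ∈ S <;> simp [h1, h2]
  have key : c d v i - c d v j
      = (∑ S ∈ (F d).filter (fun S => i ∈ S ∧ j ∉ S), shapKernel d S * r d v S)
        - (∑ S ∈ (F d).filter (fun S => j ∈ S ∧ i ∉ S), shapKernel d S * r d v S) := by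
    rw [c, c, ← Finset.sum_sub_distrib, Finset.sum_filter, Finset.sum_filter,
      ← Finset.sum_sub_distrib]
    exact Finset.sum_congr rfl fun S _ => split S _
  have main : c d v i - c d v j = 0 := by
    rw [key, F, reindex_ij d hij _, reindex_ij d hij.symm _,
      Finset.erase_right_comm (a := j) (b := i), ← Finset.sum_sub_distrib]
    have term : ∀ T ∈ ((univ.erase i).erase j).powerset,
        shapKernel d (insert i T) * r d v (insert i T)
          - shapKernel d (insert j T) * r d v (insert j T)
        = shapKernel d (insert i T) * (v (insert i T) - v (insert j T))
          - shapKernel d (insert i T) * (shapley d v i - shapley d v j) := by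
      intro T hT
      obtain ⟨hiT, hjT⟩ := memA d hT
      have hk : shapKernel d (insert j T) = shapKernel d (insert i T) :=
        kernel_congr_card d (by rw [Finset.card_insert_of_notMem hjT,
          Finset.card_insert_of_notMem hiT])
      rw [hk, r_insert d v hiT, r_insert d v hjT]
      ring
    rw [Finset.sum_congr rfl term, Finset.sum_sub_distrib, ← Finset.sum_mul,
      Bsum d hd hij, kernelsum_vals d hd v hij]
    ring
  linarith

lemma indicator_sum (d : ℕ) (hd : 2 ≤ d) {i j : Fin d} (hij : i ≠ j) :
    ∑ S ∈ F d, (if i ∈ S ∧ j ∉ S then shapKernel d S else 0)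
      = ((d : ℝ) - 1) / (d : ℝ) := by
  rw [← Finset.sum_filter, F, reindex_ij d hij, Bsum d hd hij]

lemma ite_expand {α : Type*} [Fintype α] [DecidableEq α] (S : Finset α) (g : α → ℝ) :
    ∑ a ∈ S, g a = ∑ a : α, if a ∈ S then g a else 0 := by
  rw [Finset.sum_ite_mem, univ_inter]

lemma ite_expand_not {α : Type*} [Fintype α] [DecidableEq α] (S : Finset α) (g : α → ℝ) :
    ∑ a ∈ Sᶜ, g a = ∑ a : α, if a ∉ S then g a else 0 := by
  simp only [← Finset.mem_compl]
  rw [Finset.sum_ite_mem, univ_inter]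

lemma quad (d : ℕ) (hd : 2 ≤ d) (h : Fin d → ℝ) (h0 : ∑ i, h i = 0) :
    ∑ S ∈ F d, shapKernel d S * (∑ k ∈ S, h k) ^ 2
      = ((d : ℝ) - 1) / (d : ℝ) * ∑ i, (h i) ^ 2 := by
  have step1 : ∀ S ∈ F d, shapKernel d S * (∑ k ∈ S, h k) ^ 2
      = ∑ a : Fin d, ∑ b : Fin d,
          (if a ∈ S then (if b ∉ S then - shapKernel d S * h a * h b else 0) else 0) := by
    intro S hS
    have hcompl : ∑ k ∈ Sᶜ, h k = - ∑ k ∈ S, h k := by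
      have := Finset.sum_add_sum_compl S h
      rw [h0] at this
      linarith
    have e1 : shapKernel d S * (∑ k ∈ S, h k) ^ 2
        = ∑ a ∈ S, ∑ b ∈ Sᶜ, - shapKernel d S * h a * h b := by
      have e1a : ∀ a : Fin d, ∑ b ∈ Sᶜ, - shapKernel d S * h a * h b
          = (- shapKernel d S * h a) * ∑ b ∈ Sᶜ, h b := by
        intro a; rw [Finset.mul_sum]
      rw [Finset.sum_congr rfl fun a (_ : a ∈ S) => e1a a, ← Finset.sum_mul, hcompl]
      have e1b : ∑ a ∈ S, - shapKernel d S * h a = - shapKernel d S * ∑ a ∈ S, h a := by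
        rw [Finset.mul_sum]
      rw [e1b]; ring
    rw [e1, ite_expand]
    refine Finset.sum_congr rfl fun a _ => ?_
    rw [show (∑ b ∈ Sᶜ, - shapKernel d S * h a * h b)
        = ∑ b : Fin d, if b ∉ S then - shapKernel d S * h a * h b else 0 from
        ite_expand_not S _]
    split_ifs with ha
    · rfl
    · exact (Finset.sum_const_zero).symm
  rw [Finset.sum_congr rfl step1, Finset.sum_comm]
  have swap2 : ∀ a : Fin d, ∑ S ∈ F d, ∑ b : Fin d,
        (if a ∈ S then (if b ∉ S then - shapKernel d S * h a * h b else 0) else 0)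
      = ∑ b : Fin d, ∑ S ∈ F d,
        (if a ∈ S then (if b ∉ S then - shapKernel d S * h a * h b else 0) else 0) := by
    intro a; rw [Finset.sum_comm]
  rw [Finset.sum_congr rfl fun a _ => swap2 a]
  have hin : ∀ a b : Fin d, ∑ S ∈ F d,
        (if a ∈ S then (if b ∉ S then - shapKernel d S * h a * h b else 0) else 0)
      = if a = b then 0 else ((d : ℝ) - 1) / (d : ℝ) * (-(h a * h b)) := by
    intro a b
    have e : ∀ S : Finset (Fin d),
        (if a ∈ S then (if b ∉ S then - shapKernel d S * h a * h b else 0) else 0)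
          = (if a ∈ S ∧ b ∉ S then shapKernel d S else 0) * (-(h a * h b)) := by
      intro S
      by_cases h1 : a ∈ S <;> by_cases h2 : b ∈ S <;> simp [h1, h2] <;> ring
    rw [Finset.sum_congr rfl fun S _ => e S, ← Finset.sum_mul]
    rcases eq_or_ne a b with rfl | hab
    · have hz : ∑ S ∈ F d, (if a ∈ S ∧ a ∉ S then shapKernel d S else 0) = 0 := by
        refine Finset.sum_eq_zero fun S _ => ?_
        rw [if_neg]; rintro ⟨hx, hy⟩; exact hy hx
      rw [hz, if_pos rfl, zero_mul]
    · rw [indicator_sum d hd hab, if_neg hab]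
  rw [Finset.sum_congr rfl fun a _ =>
    Finset.sum_congr rfl fun b _ => hin a b]
  have inner : ∀ a : Fin d,
      ∑ b : Fin d, (if a = b then 0 else ((d : ℝ) - 1) / (d : ℝ) * (-(h a * h b)))
        = ((d : ℝ) - 1) / (d : ℝ) * (h a) ^ 2 := by
    intro a
    have e : ∀ b : Fin d, (if a = b then 0 else ((d : ℝ) - 1) / (d : ℝ) * (-(h a * h b)))
        = ((d : ℝ) - 1) / (d : ℝ) * (-(h a * h b))
          - (if a = b then ((d : ℝ) - 1) / (d : ℝ) * (-(h a * h b)) else 0) := by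
      intro b; split_ifs <;> ring
    rw [Finset.sum_congr rfl fun b _ => e b, Finset.sum_sub_distrib,
      Finset.sum_ite_eq _ a (fun b => ((d : ℝ) - 1) / (d : ℝ) * (-(h a * h b))),
      if_pos (Finset.mem_univ a)]
    have e2 : ∑ b : Fin d, ((d : ℝ) - 1) / (d : ℝ) * (-(h a * h b))
        = (-(((d : ℝ) - 1) / (d : ℝ)) * h a) * ∑ b, h b := by
      rw [Finset.mul_sum]
      exact Finset.sum_congr rfl fun b _ => by ring
    rw [e2, h0]
    ring
  rw [Finset.sum_congr rfl fun a _ => inner a, ← Finset.mul_sum]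

lemma lsLoss_eq (d : ℕ) (v : Finset (Fin d) → ℝ) (φ : Fin d → ℝ) :
    lsLoss d v φ = ∑ S ∈ F d, shapKernel d S * (v S - v ∅ - ∑ j ∈ S, φ j) ^ 2 := rfl

lemma cross_zero (d : ℕ) (hd : 2 ≤ d) (v : Finset (Fin d) → ℝ) (h : Fin d → ℝ)
    (h0 : ∑ i, h i = 0) :
    ∑ S ∈ F d, shapKernel d S * r d v S * (∑ k ∈ S, h k) = 0 := by
  have step1 : ∀ S ∈ F d, shapKernel d S * r d v S * (∑ k ∈ S, h k)
      = ∑ k : Fin d, (if k ∈ S then shapKernel d S * r d v S else 0) * h k := by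
    intro S _
    rw [Finset.mul_sum, ite_expand]
    refine Finset.sum_congr rfl fun k _ => ?_
    split_ifs <;> ring
  rw [Finset.sum_congr rfl step1, Finset.sum_comm]
  have step2 : ∀ k : Fin d,
      ∑ S ∈ F d, (if k ∈ S then shapKernel d S * r d v S else 0) * h k
        = c d v k * h k := by
    intro k
    rw [c, Finset.sum_mul]
  rw [Finset.sum_congr rfl fun k _ => step2 k]
  have i0 : Fin d := ⟨0, by omega⟩
  have step3 : ∀ k : Fin d, c d v k * h k = c d v i0 * h k := fun k => by
    rw [c_const d v hd k i0]
  rw [Finset.sum_congr rfl fun k _ => step3 k, ← Finset.mul_sum, h0, mul_zero]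

lemma master (d : ℕ) (hd : 2 ≤ d) (v : Finset (Fin d) → ℝ) (φ : Fin d → ℝ)
    (hφ : ∑ i, φ i = v univ - v ∅) :
    lsLoss d v φ = lsLoss d v (shapley d v)
      + ((d : ℝ) - 1) / (d : ℝ) * ∑ i, (φ i - shapley d v i) ^ 2 := by
  set h : Fin d → ℝ := fun i => φ i - shapley d v i with hh
  have h0 : ∑ i, h i = 0 := by
    rw [hh]
    rw [Finset.sum_sub_distrib, hφ, efficiency d (by omega) v]
    ring
  have expand : ∀ S ∈ F d, shapKernel d S * (v S - v ∅ - ∑ k ∈ S, φ k) ^ 2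
      = shapKernel d S * (v S - v ∅ - ∑ k ∈ S, shapley d v k) ^ 2
        - 2 * (shapKernel d S * r d v S * (∑ k ∈ S, h k))
        + shapKernel d S * (∑ k ∈ S, h k) ^ 2 := by
    intro S _
    have hsum : ∑ k ∈ S, φ k = ∑ k ∈ S, shapley d v k + ∑ k ∈ S, h k := by
      rw [← Finset.sum_add_distrib]
      refine Finset.sum_congr rfl fun k _ => ?_
      rw [hh]; ring
    rw [hsum, r]
    ring
  rw [lsLoss_eq, Finset.sum_congr rfl expand, Finset.sum_add_distrib,
    Finset.sum_sub_distrib, ← Finset.mul_sum, cross_zero d hd v h h0,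
    quad d hd h h0, lsLoss_eq]
  ring

end ShapAux

open ShapAux in
theorem shapley_unique_ls_minimizer (d : ℕ) (hd : 2 ≤ d) (v : Finset (Fin d) → ℝ) :
    (∑ i, shapley d v i = v Finset.univ - v ∅) ∧
      ∀ φ : Fin d → ℝ, (∑ i, φ i = v Finset.univ - v ∅) →
        (lsLoss d v (shapley d v) ≤ lsLoss d v φ ∧
          (lsLoss d v φ = lsLoss d v (shapley d v) → φ = shapley d v)) := by
  refine ⟨efficiency d (by omega) v, ?_⟩
  intro φ hφ
  have key := master d hd v φ hφ
  have hdpos : (0:ℝ) < (d:ℝ) := by positivity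
  have hd2 : (2:ℝ) ≤ (d:ℝ) := by exact_mod_cast hd
  have hcoef : (0:ℝ) < ((d : ℝ) - 1) / (d : ℝ) := by
    apply div_pos <;> linarith
  have hsq : (0:ℝ) ≤ ∑ i, (φ i - shapley d v i) ^ 2 :=
    Finset.sum_nonneg fun i _ => sq_nonneg _
  constructor
  · rw [key]
    nlinarith [mul_nonneg hcoef.le hsq]
  · intro heq
    rw [key] at heq
    have hz : ∑ i, (φ i - shapley d v i) ^ 2 = 0 := by
      have := mul_nonneg hcoef.le hsq
      have h1 : ((d : ℝ) - 1) / (d : ℝ) * ∑ i, (φ i - shapley d v i) ^ 2 = 0 := by linarith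
      rcases mul_eq_zero.1 h1 with h | h
      · exact absurd h hcoef.ne'
      · exact h
    funext i
    have hi : (φ i - shapley d v i) ^ 2 = 0 :=
      (Finset.sum_eq_zero_iff_of_nonneg fun i _ => sq_nonneg _).1 hz i (Finset.mem_univ i)
    have := pow_eq_zero_iff (n := 2) (by norm_num) |>.1 hi
    linarith [this]
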